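/- Let 𝒜 be a commutative unital ℂ-algebra, G a finite group acting on 𝒜 by ℂ-algebra automorphisms, and 𝒜⋊G the associated skew group algebra. Let ε : 𝒜⋊G → ℂ be a ℂ-algebra homomorphism with ε(g) ≠ 0 for all g ∈ G, set 𝒜' = {a ∈ 𝒜 : ∑_{g∈G} g(a) = 0}, and let J_ε be the two-sided ideal of 𝒜⋊G generated by 𝒜' together with the elements g − ε(g)·1 for g ∈ G. Let n ≥ 2, let λ₁ ≥ λ₂ ≥ ⋯ ≥ λ_n be integers, let M be a module over the Lie algebra 𝔤𝔩_n(𝒜⋊G), and let v ∈ M satisfy: (E_{ij}x)·v = 0 for all 1 ≤ i < j ≤ n and all x ∈ 𝒜⋊G; (E_{ii}x − E_{jj}x)·v = (λ_i − λ_j)·ε(x)·v for all i, j and all x ∈ 𝒜⋊G; and the iterated action (E_{ji}1)^{λ_i − λ_j + 1}·v = 0 for all 1 ≤ i < j ≤ n. Then for every x ∈ J_ε one has (E_{ij}x)·v = 0 for all i ≠ j and (E_{ii}x − E_{jj}x)·v = 0 for all i, j; that is, 𝔰𝔩_n(ℂ) ⊗ J_ε annihilates v. -/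

import Mathlib

/-!
STATEMENT 17: Let `𝒜` be a commutative unital ℂ-algebra with an action of a finite group
`G` by ℂ-algebra automorphisms, and let `S = 𝒜 ⋊ G` be the skew group algebra
(formalized abstractly: a ℂ-algebra `S` with an algebra embedding `ιA : 𝒜 → S`, a
multiplicative map `ιG : G → S` with `ιG g · ιA a = ιA (g•a) · ιG g`, such that
`(a, g) ↦ ιA a · ιG g` gives a ℂ-linear isomorphism `𝒜 ⊗ ℂ[G] ≅ S`).  Let
`ε : S → ℂ` be a ℂ-algebra homomorphism with `ε(g) ≠ 0` for all `g ∈ G`, let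
`𝒜' = {a : ∑_g g(a) = 0}`, and let `J_ε` be the two-sided ideal of `S` generated by
`𝒜'` and the elements `g − ε(g)·1`.  If `λ₁ ≥ ⋯ ≥ λ_n` are integers, `M` is a module
over `𝔤𝔩_n(S)` and `v ∈ M` satisfies the listed highest-weight conditions, then
`𝔰𝔩_n(ℂ) ⊗ J_ε` annihilates `v`.
-/

attribute [local instance 100] LieRing.ofAssociativeRing

section Sl2Aux

variable {M : Type} [AddCommGroup M] [Module ℂ M]

private lemma sl2_h_pow (f h : Module.End ℂ M) (v : M) (μ : ℂ)
    (hhf : h * f = f * h - (2:ℂ) • f) (hhv : h v = μ • v) :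
    ∀ l : ℕ, h ((f ^ l) v) = (μ - 2 * l) • (f ^ l) v := by
  intro l
  induction l with
  | zero => simpa using hhv
  | succ l ih =>
    have h1 : (f ^ (l + 1)) v = f ((f ^ l) v) := by rw [pow_succ']; rfl
    have h2 : ∀ w : M, h (f w) = f (h w) - (2:ℂ) • f w := by
      intro w
      have := congrArg (fun g : Module.End ℂ M => g w) hhf
      simpa only [Module.End.mul_apply, LinearMap.sub_apply, LinearMap.smul_apply] using this
    rw [h1, h2, ih, map_smul]
    have hc : (μ - 2 * ((l : ℂ) + 1)) = (μ - 2 * l) - 2 := by ring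
    rw [Nat.cast_succ, hc]
    module

private lemma sl2_e_pow (e f h : Module.End ℂ M) (v : M) (μ : ℂ)
    (hef : e * f = f * e + h) (hhf : h * f = f * h - (2:ℂ) • f)
    (hev : e v = 0) (hhv : h v = μ • v) :
    ∀ l : ℕ, e ((f ^ (l + 1)) v) = (((l : ℂ) + 1) * (μ - l)) • (f ^ l) v := by
  have hef' : ∀ w : M, e (f w) = f (e w) + h w := by
    intro w
    have := congrArg (fun g : Module.End ℂ M => g w) hef
    simpa only [Module.End.mul_apply, LinearMap.add_apply] using this
  intro l
  induction l with
  | zero =>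
    rw [pow_one, hef' v, hev, map_zero, zero_add, hhv]
    simp
  | succ l ih =>
    have h1 : (f ^ (l + 1 + 1)) v = f ((f ^ (l + 1)) v) := by rw [pow_succ']; rfl
    rw [h1, hef', ih, map_smul, sl2_h_pow f h v μ hhf hhv (l + 1)]
    rw [show f ((f ^ l) v) = (f ^ (l + 1)) v from (by rw [pow_succ']; rfl), ← add_smul]
    congr 1
    push_cast
    ring

private lemma sl2_estring (e f h : Module.End ℂ M) (v : M) (m : ℕ)
    (hef : e * f = f * e + h) (hhf : h * f = f * h - (2:ℂ) • f)
    (hev : e v = 0) (hhv : h v = (m : ℂ) • v) :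
    ∀ k l : ℕ, k ≤ l → l ≤ m → ∃ c : ℂ, c ≠ 0 ∧ (e ^ k) ((f ^ l) v) = c • (f ^ (l - k)) v := by
  intro k
  induction k with
  | zero => intro l _ _; exact ⟨1, one_ne_zero, by simp⟩
  | succ k ih =>
    intro l hkl hlm
    obtain ⟨c, hc, hck⟩ := ih l (le_trans (Nat.le_succ k) hkl) hlm
    have hk1 : l - k = (l - (k + 1)) + 1 := by omega
    have h2 : (e ^ (k + 1)) ((f ^ l) v) = e ((e ^ k) ((f ^ l) v)) := by rw [pow_succ']; rfl
    have h3 := sl2_e_pow e f h v ((m : ℂ)) hef hhf hev hhv (l - (k + 1))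
    have hrm : l - (k + 1) < m := by omega
    refine ⟨c * ((((l - (k + 1) : ℕ) : ℂ) + 1) * ((m : ℂ) - ((l - (k + 1) : ℕ) : ℂ))), ?_, ?_⟩
    · refine mul_ne_zero hc (mul_ne_zero ?_ ?_)
      · exact Nat.cast_add_one_ne_zero (l - (k + 1))
      · rw [sub_ne_zero]
        exact_mod_cast (Nat.ne_of_lt hrm).symm
    · rw [h2, hck, hk1, map_smul, h3, smul_smul]

private lemma sl2_em_top (e f h : Module.End ℂ M) (v : M) (m : ℕ) (hm : 1 ≤ m)
    (hef : e * f = f * e + h) (hhf : h * f = f * h - (2:ℂ) • f)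
    (hev : e v = 0) (hhv : h v = (m : ℂ) • v) :
    (e ^ m) ((f ^ (m + 1)) v) = 0 := by
  obtain ⟨m', rfl⟩ : ∃ m', m = m' + 1 := ⟨m - 1, by omega⟩
  have h1 : e ((f ^ (m' + 1 + 1)) v) = 0 := by
    rw [sl2_e_pow e f h v (((m' + 1 : ℕ)) : ℂ) hef hhf hev hhv (m' + 1)]
    simp
  rw [pow_succ, Module.End.mul_apply, h1, map_zero]

private lemma sl2_em_low (e f h : Module.End ℂ M) (v : M) (m l : ℕ) (hl : l < m)
    (hef : e * f = f * e + h) (hhf : h * f = f * h - (2:ℂ) • f)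
    (hev : e v = 0) (hhv : h v = (m : ℂ) • v) :
    (e ^ m) ((f ^ l) v) = 0 := by
  obtain ⟨c, hc, hcl⟩ := sl2_estring e f h v m hef hhf hev hhv l l le_rfl (le_of_lt hl)
  have h2 : e ((e ^ l) ((f ^ l) v)) = 0 := by
    rw [hcl, Nat.sub_self, pow_zero, map_smul]
    simp [hev]
  have hsplit : e ^ m = e ^ (m - l - 1) * (e * e ^ l) := by
    rw [← pow_succ', ← pow_add]
    congr 1
    omega
  rw [hsplit, Module.End.mul_apply, Module.End.mul_apply, h2, map_zero]

end Sl2Aux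

section LowerAux

variable {M : Type} [AddCommGroup M] [Module ℂ M]

private lemma lower_main {n : ℕ} {S : Type} [Ring S] [Algebra ℂ S]
    [LieRingModule (Matrix (Fin n) (Fin n) S) M]
    [LieModule ℂ (Matrix (Fin n) (Fin n) S) M]
    (ε : S →ₐ[ℂ] ℂ) (v : M) (p q : Fin n) (hpq : p ≠ q) (m : ℕ)
    (hup1 : ∀ x : S, ⁅Matrix.single p q x, v⁆ = 0)
    (hdiag1 : ∀ x : S,
      ⁅Matrix.single p p x - Matrix.single q q x, v⁆ = ((m : ℂ) * ε x) • v)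
    (hlow1 : (fun w => ⁅Matrix.single q p (1 : S), w⁆)^[m + 1] v = 0)
    (u : S) (d : ℕ) (hd : 0 < d) (hu : u ^ d = 1) (s t : S) :
    ⁅Matrix.single q p (s * (u - algebraMap ℂ S (ε u)) * t), v⁆ = 0 := by
  classical
  set N : S → Prop := fun x => ⁅Matrix.single q p x, v⁆ = 0 with hNdef
  -- basic closure properties of N
  have hNadd : ∀ {x y : S}, N x → N y → N (x + y) := by
    intro x y hx hy
    show ⁅Matrix.single q p (x + y), v⁆ = 0
    rw [Matrix.single_add, add_lie]
    rw [show ⁅Matrix.single q p x, v⁆ = 0 from hx,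
      show ⁅Matrix.single q p y, v⁆ = 0 from hy, add_zero]
  have hstdsub : ∀ x y : S, Matrix.single q p (x - y)
      = Matrix.single q p x - Matrix.single q p y := by
    intro x y
    ext a b
    simp only [Matrix.single, Matrix.of_apply, Matrix.sub_apply]
    split_ifs <;> simp
  have hNsub : ∀ {x y : S}, N x → N y → N (x - y) := by
    intro x y hx hy
    show ⁅Matrix.single q p (x - y), v⁆ = 0
    rw [hstdsub, sub_lie]
    rw [show ⁅Matrix.single q p x, v⁆ = 0 from hx,
      show ⁅Matrix.single q p y, v⁆ = 0 from hy, sub_zero]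
  have hNhalf : ∀ {x : S}, N (x + x) → N x := by
    intro x hx
    have h2 : ⁅Matrix.single q p (x + x), v⁆
        = ⁅Matrix.single q p x, v⁆ + ⁅Matrix.single q p x, v⁆ := by
      rw [Matrix.single_add, add_lie]
    have hx' : ⁅Matrix.single q p (x + x), v⁆ = 0 := hx
    rw [h2, ← two_smul ℂ] at hx'
    show ⁅Matrix.single q p x, v⁆ = 0
    exact (smul_eq_zero.mp hx').resolve_left (by norm_num)
  have mulne : ∀ (a b : Fin n) (x y : S),
      Matrix.single a p x * Matrix.single q b y = 0 := by
    intro a b x y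
    exact Matrix.single_mul_single_of_ne x a p q hpq y
  -- F1 : Jordan multiplication
  have hF1 : ∀ x : S, N x → ∀ s' : S, N (s' * x + x * s') := by
    intro x hx s'
    have hx' : ⁅Matrix.single q p x, v⁆ = 0 := hx
    have hb : ⁅Matrix.single p p s' - Matrix.single q q s',
        Matrix.single q p x⁆
        = -Matrix.single q p (s' * x + x * s') := by
      simp only [Ring.lie_def, sub_mul, mul_sub, mulne,
        Matrix.single_mul_single_same, Matrix.single_add]
      abel
    have hlie := lie_lie (Matrix.single p p s' - Matrix.single q q s')
      (Matrix.single q p x) v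
    rw [hb, hx', hdiag1 s', lie_zero, lie_smul, hx', smul_zero, sub_zero, neg_lie,
      neg_eq_zero] at hlie
    exact hlie
  -- F2
  have hF2 : ∀ x t' : S, N x → N t' → ∀ s' : S, N (x * s' * t' + t' * s' * x) := by
    intro x t' hx ht' s'
    have hx' : ⁅Matrix.single q p x, v⁆ = 0 := hx
    have ht'' : ⁅Matrix.single q p t', v⁆ = 0 := ht'
    have hCv : ⁅Matrix.single p p (s' * x) - Matrix.single q q (x * s'), v⁆
        = 0 := by
      have hC : ⁅Matrix.single p q s', Matrix.single q p x⁆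
          = Matrix.single p p (s' * x) - Matrix.single q q (x * s') := by
        rw [Ring.lie_def, Matrix.single_mul_single_same, Matrix.single_mul_single_same]
      rw [← hC, lie_lie, hx', lie_zero, hup1 s', lie_zero, sub_zero]
    have hCf : ⁅Matrix.single p p (s' * x) - Matrix.single q q (x * s'),
        Matrix.single q p t'⁆
        = -Matrix.single q p (x * s' * t' + t' * s' * x) := by
      simp only [Ring.lie_def, sub_mul, mul_sub, mulne,
        Matrix.single_mul_single_same, Matrix.single_add, ← mul_assoc]
      abel
    have hlie := lie_lie (Matrix.single p p (s' * x) - Matrix.single q q (x * s'))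
      (Matrix.single q p t') v
    rw [hCf, ht'', lie_zero, hCv, lie_zero, sub_zero, neg_lie, neg_eq_zero] at hlie
    exact hlie
  -- idempotents with ε = 0 are in N
  have hIdem : ∀ z : S, z * z = z → ε z = 0 → N z := by
    intro z hzz hez
    rcases Nat.eq_zero_or_pos m with hm0 | hm1
    · have h1 : N (1 : S) := by
        show ⁅Matrix.single q p (1 : S), v⁆ = 0
        have := hlow1
        rw [hm0] at this
        simpa using this
      have h2 := hF1 1 h1 z
      rw [mul_one, one_mul] at h2
      exact hNhalf h2
    · -- the sl2 argument
      set z' : S := 1 - z with hz'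
      have hzz' : z * z' = 0 := by rw [hz', mul_sub, mul_one, hzz, sub_self]
      have hz'z : z' * z = 0 := by rw [hz', sub_mul, one_mul, hzz, sub_self]
      have hz'z' : z' * z' = z' := by
        rw [hz', sub_mul, one_mul, mul_sub, mul_one, hzz, sub_self, sub_zero]
      have hez' : ε z' = 1 := by rw [hz', map_sub, map_one, hez, sub_zero]
      set Φ := LieModule.toEnd ℂ (Matrix (Fin n) (Fin n) S) M with hΦ
      have Φbr : ∀ X Y : Matrix (Fin n) (Fin n) S, Φ X * Φ Y = Φ Y * Φ X + Φ ⁅X, Y⁆ := by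
        intro X Y
        rw [Φ.map_lie, Ring.lie_def]
        abel
      set Ez := Φ (Matrix.single p q z') with hEz
      set Fz := Φ (Matrix.single q p z) with hFz
      set Fz' := Φ (Matrix.single q p z') with hFz'
      set Hh := Φ (Matrix.single p p z' - Matrix.single q q z') with hHh
      have hzsum : z + z' = (1 : S) := by rw [hz']; abel
      have hFone : Φ (Matrix.single q p (1 : S)) = Fz + Fz' := by
        rw [hFz, hFz', ← map_add, ← Matrix.single_add, hzsum]
      have hcomm1 : Commute Fz Fz' := by
        have hb : ⁅Matrix.single q p z, Matrix.single q p z'⁆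
            = (0 : Matrix (Fin n) (Fin n) S) := by
          rw [Ring.lie_def, mulne, mulne, sub_zero]
        have h3 := Φbr (Matrix.single q p z) (Matrix.single q p z')
        rw [hb, map_zero, add_zero] at h3
        exact h3
      have hcomm2 : Commute Ez Fz := by
        have hb : ⁅Matrix.single p q z', Matrix.single q p z⁆
            = (0 : Matrix (Fin n) (Fin n) S) := by
          rw [Ring.lie_def, Matrix.single_mul_single_same, Matrix.single_mul_single_same,
            hz'z, hzz', Matrix.single_zero, Matrix.single_zero, sub_zero]
        have h3 := Φbr (Matrix.single p q z') (Matrix.single q p z)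
        rw [hb, map_zero, add_zero] at h3
        exact h3
      have hEF : Ez * Fz' = Fz' * Ez + Hh := by
        have hb : ⁅Matrix.single p q z', Matrix.single q p z'⁆
            = Matrix.single p p z' - Matrix.single q q z' := by
          rw [Ring.lie_def, Matrix.single_mul_single_same, Matrix.single_mul_single_same, hz'z']
        have h3 := Φbr (Matrix.single p q z') (Matrix.single q p z')
        rw [hb] at h3
        exact h3
      have hHF : Hh * Fz' = Fz' * Hh - (2 : ℂ) • Fz' := by
        have hb : ⁅Matrix.single p p z' - Matrix.single q q z',
            Matrix.single q p z'⁆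
            = (-2 : ℂ) • Matrix.single q p z' := by
          simp only [Ring.lie_def, sub_mul, mul_sub, mulne,
            Matrix.single_mul_single_same, hz'z']
          module
        have h3 := Φbr (Matrix.single p p z' - Matrix.single q q z')
          (Matrix.single q p z')
        rw [hb, map_smul] at h3
        rw [h3]
        module
      have hEv : Ez v = 0 := hup1 z'
      have hHv : Hh v = (m : ℂ) • v := by
        have h3 : Hh v = ⁅Matrix.single p p z' - Matrix.single q q z', v⁆ := rfl
        rw [h3, hdiag1 z', hez', mul_one]
      have htop : ((Fz + Fz') ^ (m + 1)) v = 0 := by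
        rw [← hFone, Module.End.pow_apply]
        exact hlow1
      have hswap : ∀ (k : ℕ) (w : M), (Ez ^ m) ((Fz ^ k) w) = (Fz ^ k) ((Ez ^ m) w) := by
        intro k w
        have hc : (Ez ^ m) * (Fz ^ k) = (Fz ^ k) * (Ez ^ m) := hcomm2.pow_pow m k
        have h4 := DFunLike.congr_fun hc w
        simpa only [Module.End.mul_apply] using h4
      have h1 : ((Fz + Fz') ^ (m + 1)) v
          = ∑ k ∈ Finset.range (m + 2), ((m + 1).choose k)
              • ((Fz ^ k) ((Fz' ^ (m + 1 - k)) v)) := by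
        rw [hcomm1.add_pow, LinearMap.sum_apply]
        refine Finset.sum_congr rfl fun k _ => ?_
        rw [Module.End.mul_apply, Module.End.mul_apply, Module.End.natCast_apply, map_nsmul,
          map_nsmul]
      have h2 : ∀ k ∈ Finset.range (m + 2), k ≠ 1 →
          ((m + 1).choose k) • ((Ez ^ m) ((Fz ^ k) ((Fz' ^ (m + 1 - k)) v))) = 0 := by
        intro k hk hk1
        rcases Nat.eq_zero_or_pos k with rfl | hkpos
        · have h5 : (Ez ^ m) ((Fz' ^ (m + 1)) v) = 0 :=
            sl2_em_top Ez Fz' Hh v m hm1 hEF hHF hEv hHv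
          simp only [pow_zero, Module.End.one_apply, Nat.sub_zero]
          rw [h5, smul_zero]
        · have hk2 : 2 ≤ k := by omega
          have hl : m + 1 - k < m := by
            have := Finset.mem_range.mp hk
            omega
          have h0 : (Ez ^ m) ((Fz' ^ (m + 1 - k)) v) = 0 :=
            sl2_em_low Ez Fz' Hh v m (m + 1 - k) hl hEF hHF hEv hHv
          rw [hswap, h0, map_zero, smul_zero]
      have h4 : (Ez ^ m) (((Fz + Fz') ^ (m + 1)) v) = 0 := by rw [htop, map_zero]
      rw [h1, map_sum] at h4
      simp only [map_nsmul] at h4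
      rw [Finset.sum_eq_single_of_mem 1 (Finset.mem_range.mpr (by omega)) h2] at h4
      obtain ⟨c, hc0, hcm⟩ := sl2_estring Ez Fz' Hh v m hEF hHF hEv hHv m m le_rfl le_rfl
      rw [Nat.add_sub_cancel, hswap 1 _, hcm] at h4
      simp only [pow_one, Nat.sub_self, pow_zero, Module.End.one_apply, map_smul] at h4
      rw [← Nat.cast_smul_eq_nsmul ℂ, smul_smul] at h4
      have hcoef : (((m + 1).choose 1 : ℕ) : ℂ) * c ≠ 0 := by
        refine mul_ne_zero ?_ hc0
        rw [Nat.choose_one_right]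
        push_cast
        exact Nat.cast_add_one_ne_zero m
      show ⁅Matrix.single q p z, v⁆ = 0
      have h6 : Fz v = ⁅Matrix.single q p z, v⁆ := rfl
      rw [← h6]
      exact (smul_eq_zero.mp h4).resolve_left hcoef
  -- corner and one-sided products with an idempotent
  have hese : ∀ z s' : S, z * z = z → N z → N (z * s' * z) := by
    intro z s' hzz hz
    exact hNhalf (hF2 z z hz hz s')
  have hsz : ∀ z s' : S, z * z = z → ε z = 0 → N (s' * z) := by
    intro z s' hzz hez
    have hz : N z := hIdem z hzz hez
    have hzw : z * (((1 : S) - z) * (s' * z)) = 0 := by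
      rw [← mul_assoc, mul_sub, mul_one, hzz, sub_self, zero_mul]
    have hwz : (((1 : S) - z) * (s' * z)) * z = ((1 : S) - z) * (s' * z) := by
      rw [mul_assoc, mul_assoc, hzz]
    have hww : (((1 : S) - z) * (s' * z)) * (((1 : S) - z) * (s' * z)) = 0 := by
      rw [mul_assoc ((1 : S) - z) (s' * z) _, mul_assoc s' z _, hzw, mul_zero, mul_zero]
    have hz1 : (z + ((1 : S) - z) * (s' * z)) * (z + ((1 : S) - z) * (s' * z))
        = z + ((1 : S) - z) * (s' * z) := by
      rw [mul_add, add_mul, add_mul, hzz, hzw, hwz, hww, add_zero, add_zero]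
    have hεw : ε (z + ((1 : S) - z) * (s' * z)) = 0 := by
      rw [map_add, hez, map_mul, map_mul, hez, mul_zero, mul_zero, add_zero]
    have hNzw : N (z + ((1 : S) - z) * (s' * z)) := hIdem _ hz1 hεw
    have hNw : N (((1 : S) - z) * (s' * z)) := by
      have h5 := hNsub hNzw hz
      rwa [add_sub_cancel_left] at h5
    have hNzsz : N (z * s' * z) := hese z s' hzz hz
    have hdecomp : s' * z = z * s' * z + ((1 : S) - z) * (s' * z) := by
      rw [sub_mul, one_mul, mul_assoc]
      abel
    rw [hdecomp]
    exact hNadd hNzsz hNw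
  have hzt : ∀ z t' : S, z * z = z → ε z = 0 → N (z * t') := by
    intro z t' hzz hez
    have hz : N z := hIdem z hzz hez
    have hwz : ((z * t') * ((1 : S) - z)) * z = 0 := by
      rw [mul_assoc, sub_mul, one_mul, hzz, sub_self, mul_zero]
    have hzw : z * ((z * t') * ((1 : S) - z)) = (z * t') * ((1 : S) - z) := by
      rw [← mul_assoc, ← mul_assoc, hzz]
    have hww : ((z * t') * ((1 : S) - z)) * ((z * t') * ((1 : S) - z)) = 0 := by
      have h9 : ((1 : S) - z) * (z * t') = 0 := by
        rw [← mul_assoc, sub_mul, one_mul, hzz, sub_self, zero_mul]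
      calc ((z * t') * ((1 : S) - z)) * ((z * t') * ((1 : S) - z))
          = (z * t') * ((((1 : S) - z) * (z * t')) * ((1 : S) - z)) := by
            rw [mul_assoc (z * t') ((1 : S) - z) ((z * t') * ((1 : S) - z)),
              ← mul_assoc ((1 : S) - z) (z * t') ((1 : S) - z)]
        _ = 0 := by rw [h9, zero_mul, mul_zero]
    have hz1 : (z + (z * t') * ((1 : S) - z)) * (z + (z * t') * ((1 : S) - z))
        = z + (z * t') * ((1 : S) - z) := by
      rw [mul_add, add_mul, add_mul, hzz, hzw, hwz, hww, add_zero, add_zero]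
    have hεw : ε (z + (z * t') * ((1 : S) - z)) = 0 := by
      rw [map_add, hez, map_mul, map_mul, hez, zero_mul, zero_mul, add_zero]
    have hNzw : N (z + (z * t') * ((1 : S) - z)) := hIdem _ hz1 hεw
    have hNw : N ((z * t') * ((1 : S) - z)) := by
      have h5 := hNsub hNzw hz
      rwa [add_sub_cancel_left] at h5
    have hNztz : N (z * t' * z) := hese z t' hzz hz
    have hdecomp : z * t' = z * t' * z + (z * t') * ((1 : S) - z) := by
      rw [mul_sub, mul_one]
      abel
    rw [hdecomp]
    exact hNadd hNztz hNw
  have hszt : ∀ z s' t' : S, z * z = z → ε z = 0 → N (s' * z * t') := by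
    intro z s' t' hzz hez
    have h1 : N (s' * z) := hsz z s' hzz hez
    have h2 : N (z * t') := hzt z t' hzz hez
    have h3 := hF2 (s' * z) (z * t') h1 h2 1
    have e1 : s' * z * 1 * (z * t') = s' * z * t' := by
      rw [mul_one, mul_assoc s' z (z * t'), ← mul_assoc z z t', hzz, ← mul_assoc]
    have e2 : z * t' * 1 * (s' * z) = z * (t' * s') * z := by
      rw [mul_one, mul_assoc z t' (s' * z), ← mul_assoc t' s' z, ← mul_assoc]
    rw [e1, e2] at h3
    have h4 : N (z * (t' * s') * z) := hese z (t' * s') hzz (hIdem z hzz hez)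
    have h5 := hNsub h3 h4
    rwa [add_sub_cancel_right] at h5
  -- construct the spectral idempotent for u
  obtain ⟨e, rfl⟩ : ∃ e, d = e + 1 := ⟨d - 1, by omega⟩
  set c : ℂ := ε u with hc
  have hcd : c ^ (e + 1) = 1 := by rw [hc, ← map_pow, hu, map_one]
  have hcne : c ≠ 0 := by
    intro h0
    rw [h0, zero_pow (Nat.succ_ne_zero e)] at hcd
    exact zero_ne_one hcd
  set γ : ℂ := ((e : ℂ) + 1) * c ^ e with hγ
  have hγne : γ ≠ 0 := mul_ne_zero (Nat.cast_add_one_ne_zero e) (pow_ne_zero _ hcne)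
  set H : S := ∑ k ∈ Finset.range (e + 1), c ^ (e - k) • u ^ k with hH
  have huH : u * H = c • H := by
    rw [hH, Finset.mul_sum, Finset.smul_sum]
    have l1 : ∀ k, u * (c ^ (e - k) • u ^ k) = c ^ (e - k) • u ^ (k + 1) := by
      intro k
      rw [mul_smul_comm, ← pow_succ']
    have l2 : ∀ k, c • (c ^ (e - k) • u ^ k) = (c ^ (e - k + 1)) • u ^ k := by
      intro k
      rw [smul_smul, ← pow_succ']
    calc ∑ k ∈ Finset.range (e + 1), u * (c ^ (e - k) • u ^ k)
        = ∑ k ∈ Finset.range (e + 1), c ^ (e - k) • u ^ (k + 1) := by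
          exact Finset.sum_congr rfl fun k _ => l1 k
      _ = (∑ k ∈ Finset.range e, c ^ (e - k) • u ^ (k + 1)) + c ^ (e - e) • u ^ (e + 1) := by
          rw [Finset.sum_range_succ]
      _ = (∑ k ∈ Finset.range e, c ^ (e - (k + 1) + 1) • u ^ (k + 1)) + c ^ (e + 1) • u ^ 0 := by
          congr 1
          · exact Finset.sum_congr rfl fun k hk => by
              have : e - k = e - (k + 1) + 1 := by
                have := Finset.mem_range.mp hk
                omega
              rw [this]
          · rw [Nat.sub_self, pow_zero, one_smul, pow_zero, hu, hcd, one_smul]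
      _ = ∑ k ∈ Finset.range (e + 1), c ^ (e - k + 1) • u ^ k := by
          rw [Finset.sum_range_succ']
          simp
      _ = ∑ k ∈ Finset.range (e + 1), c • (c ^ (e - k) • u ^ k) := by
          exact Finset.sum_congr rfl fun k _ => (l2 k).symm
  have hukH : ∀ k : ℕ, u ^ k * H = c ^ k • H := by
    intro k
    induction k with
    | zero => simp
    | succ k ih =>
      rw [pow_succ', mul_assoc, ih, mul_smul_comm, huH, smul_smul, ← pow_succ]
  have hHH : H * H = γ • H := by
    conv_lhs => rw [hH]
    rw [Finset.sum_mul]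
    have l3 : ∀ k ∈ Finset.range (e + 1), (c ^ (e - k) • u ^ k) * H = c ^ e • H := by
      intro k hk
      rw [smul_mul_assoc, hukH, smul_smul, ← pow_add, Nat.sub_add_cancel (by
        have := Finset.mem_range.mp hk
        omega : k ≤ e)]
    rw [Finset.sum_congr rfl l3, Finset.sum_const, Finset.card_range,
      ← Nat.cast_smul_eq_nsmul ℂ, smul_smul, hγ]
    push_cast
    ring_nf
  have hεH : ε H = γ := by
    rw [hH, map_sum]
    have l4 : ∀ k ∈ Finset.range (e + 1), ε (c ^ (e - k) • u ^ k) = c ^ e := by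
      intro k hk
      rw [map_smul, map_pow, ← hc, smul_eq_mul, ← pow_add, Nat.sub_add_cancel (by
        have := Finset.mem_range.mp hk
        omega : k ≤ e)]
    rw [Finset.sum_congr rfl l4, Finset.sum_const, Finset.card_range, nsmul_eq_mul, hγ]
    push_cast
    ring
  have hzz : ((1 : S) - γ⁻¹ • H) * ((1 : S) - γ⁻¹ • H) = (1 : S) - γ⁻¹ • H := by
    rw [sub_mul, one_mul, mul_sub, mul_one, smul_mul_smul_comm, hHH, smul_smul]
    have : γ⁻¹ * γ⁻¹ * γ = γ⁻¹ := by field_simp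
    rw [this, sub_sub_sub_cancel_right]
  have hεz0 : ε ((1 : S) - γ⁻¹ • H) = 0 := by
    rw [map_sub, map_one, map_smul, hεH, smul_eq_mul, inv_mul_cancel₀ hγne, sub_self]
  have hkey : (u - algebraMap ℂ S c) * ((1 : S) - γ⁻¹ • H) = u - algebraMap ℂ S c := by
    have h0 : (u - algebraMap ℂ S c) * H = 0 := by
      rw [sub_mul, huH, Algebra.smul_def, sub_self]
    rw [mul_sub, mul_one, mul_smul_comm, h0, smul_zero, sub_zero]
  have hfin := hszt ((1 : S) - γ⁻¹ • H) (s * (u - algebraMap ℂ S c)) t hzz hεz0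
  show ⁅Matrix.single q p (s * (u - algebraMap ℂ S c) * t), v⁆ = 0
  have heq : s * (u - algebraMap ℂ S c) * ((1 : S) - γ⁻¹ • H) * t
      = s * (u - algebraMap ℂ S c) * t := by
    rw [mul_assoc s (u - algebraMap ℂ S c) ((1 : S) - γ⁻¹ • H), hkey]
  rw [← heq]
  exact hfin

end LowerAux

theorem stmt_17 (𝒜 : Type) [CommRing 𝒜] [Algebra ℂ 𝒜]
    (G : Type) [Group G] [Fintype G]
    [MulSemiringAction G 𝒜] [SMulCommClass G ℂ 𝒜]
    (S : Type) [Ring S] [Algebra ℂ S]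
    (ιA : 𝒜 →ₐ[ℂ] S) (ιG : G →* S)
    (hcomm : ∀ (g : G) (a : 𝒜), ιG g * ιA a = ιA (g • a) * ιG g)
    (E : (G →₀ 𝒜) ≃ₗ[ℂ] S)
    (hE : ∀ (g : G) (a : 𝒜), E (Finsupp.single g a) = ιA a * ιG g)
    (ε : S →ₐ[ℂ] ℂ) (hε : ∀ g : G, ε (ιG g) ≠ 0)
    (J : TwoSidedIdeal S)
    (hJ : J = TwoSidedIdeal.span
        ((ιA '' {a : 𝒜 | ∑ g : G, g • a = 0})
          ∪ {s : S | ∃ g : G, s = ιG g - algebraMap ℂ S (ε (ιG g))}))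
    (n : ℕ) (hn : 2 ≤ n) (lam : Fin n → ℤ)
    (hlam : ∀ i j : Fin n, i ≤ j → lam j ≤ lam i)
    (M : Type) [AddCommGroup M] [Module ℂ M]
    [LieRingModule (Matrix (Fin n) (Fin n) S) M]
    [LieModule ℂ (Matrix (Fin n) (Fin n) S) M]
    (v : M)
    (hup : ∀ i j : Fin n, i < j → ∀ x : S, ⁅Matrix.single i j x, v⁆ = 0)
    (hdiag : ∀ (i j : Fin n) (x : S),
      ⁅Matrix.single i i x - Matrix.single j j x, v⁆
        = (((lam i - lam j : ℤ) : ℂ) * ε x) • v)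
    (hlow : ∀ i j : Fin n, i < j →
      (fun w => ⁅Matrix.single j i (1 : S), w⁆)^[(lam i - lam j).toNat + 1] v
        = 0) :
    ∀ x ∈ J,
      (∀ i j : Fin n, i ≠ j → ⁅Matrix.single i j x, v⁆ = 0)
      ∧ (∀ i j : Fin n,
          ⁅Matrix.single i i x - Matrix.single j j x, v⁆ = 0) := by
  classical
  intro x hx
  set gens : Set S :=
    {y | ∃ (g : G) (s t : S), y = s * (ιG g - algebraMap ℂ S (ε (ιG g))) * t} with hgens
  -- the span of gens is a two-sided ideal
  have hmul_left : ∀ (a : S) {b : S}, b ∈ Submodule.span ℂ gens →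
      a * b ∈ Submodule.span ℂ gens := by
    intro a b hb
    induction hb using Submodule.span_induction with
    | mem y hy =>
      obtain ⟨g, s, t, rfl⟩ := hy
      refine Submodule.subset_span ⟨g, a * s, t, ?_⟩
      rw [← mul_assoc, ← mul_assoc]
    | zero => rw [mul_zero]; exact Submodule.zero_mem _
    | add y w hy hw ihy ihw => rw [mul_add]; exact Submodule.add_mem _ ihy ihw
    | smul r y hy ihy => rw [mul_smul_comm]; exact Submodule.smul_mem _ r ihy
  have hmul_right : ∀ {b : S} (a : S), b ∈ Submodule.span ℂ gens →
      b * a ∈ Submodule.span ℂ gens := by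
    intro b a hb
    induction hb using Submodule.span_induction with
    | mem y hy =>
      obtain ⟨g, s, t, rfl⟩ := hy
      refine Submodule.subset_span ⟨g, s, t * a, ?_⟩
      rw [← mul_assoc]
    | zero => rw [zero_mul]; exact Submodule.zero_mem _
    | add y w hy hw ihy ihw => rw [add_mul]; exact Submodule.add_mem _ ihy ihw
    | smul r y hy ihy => rw [smul_mul_assoc]; exact Submodule.smul_mem _ r ihy
  set I : TwoSidedIdeal S := TwoSidedIdeal.mk' (Submodule.span ℂ gens : Set S)
    (Submodule.zero_mem _)
    (fun hx hy => Submodule.add_mem _ hx hy)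
    (fun hx => Submodule.neg_mem _ hx)
    (fun {a b} hb => hmul_left a hb)
    (fun {a b} ha => hmul_right b ha) with hI
  have hmemI : ∀ y : S, y ∈ I ↔ y ∈ Submodule.span ℂ gens := by
    intro y
    rw [hI, TwoSidedIdeal.mem_mk']
    rfl
  -- x lies in the span of gens
  have hxW : x ∈ Submodule.span ℂ gens := by
    rw [hJ] at hx
    have hsub : (ιA '' {a : 𝒜 | ∑ g : G, g • a = 0}
        ∪ {s : S | ∃ g : G, s = ιG g - algebraMap ℂ S (ε (ιG g))}) ⊆ I := by
      rintro y (⟨a, ha, rfl⟩ | ⟨g, rfl⟩)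
      · -- a with ∑ g • a = 0
        rw [SetLike.mem_coe, hmemI]
        have ha' : ∑ g : G, g • a = 0 := ha
        have key : ∀ g : G, ιA (g • a) - ιA a
            = (ιG g - algebraMap ℂ S (ε (ιG g))) * (ιA a * ιG g⁻¹)
              - (ιA a * ιG g⁻¹) * (ιG g - algebraMap ℂ S (ε (ιG g))) := by
          intro g
          have h1 : ιG g * (ιA a * ιG g⁻¹) = ιA (g • a) := by
            rw [← mul_assoc, hcomm g a, mul_assoc, ← map_mul, mul_inv_cancel, map_one, mul_one]
          have h2 : (ιA a * ιG g⁻¹) * ιG g = ιA a := by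
            rw [mul_assoc, ← map_mul, inv_mul_cancel, map_one, mul_one]
          have h3 : algebraMap ℂ S (ε (ιG g)) * (ιA a * ιG g⁻¹)
              = (ιA a * ιG g⁻¹) * algebraMap ℂ S (ε (ιG g)) := Algebra.commutes _ _
          rw [sub_mul, mul_sub, h1, h2, h3]
          abel
        have hsum1 : ∑ g : G, ιA (g • a) = 0 := by
          rw [← map_sum, ha', map_zero]
        have hsum2 : ∑ g : G, (ιA (g • a) - ιA a) = -(Fintype.card G • ιA a) := by
          rw [Finset.sum_sub_distrib, hsum1, zero_sub, Finset.sum_const, Finset.card_univ]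
        have hmemW : ∑ g : G, (ιA (g • a) - ιA a) ∈ Submodule.span ℂ gens := by
          refine Submodule.sum_mem _ fun g _ => ?_
          rw [key g]
          refine Submodule.sub_mem _ ?_ ?_
          · exact Submodule.subset_span ⟨g, 1, ιA a * ιG g⁻¹, by rw [one_mul]⟩
          · exact Submodule.subset_span ⟨g, ιA a * ιG g⁻¹, 1, by rw [mul_one]⟩
        rw [hsum2] at hmemW
        have h5 : (Fintype.card G : ℕ) • ιA a ∈ Submodule.span ℂ gens := by
          have := Submodule.neg_mem _ hmemW
          rwa [neg_neg] at this
        rw [← Nat.cast_smul_eq_nsmul ℂ] at h5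
        have h7 := Submodule.smul_mem _ ((Fintype.card G : ℂ))⁻¹ h5
        rw [smul_smul, inv_mul_cancel₀ (by
          exact_mod_cast Fintype.card_ne_zero), one_smul] at h7
        exact h7
      · rw [SetLike.mem_coe, hmemI]
        exact Submodule.subset_span ⟨g, 1, 1, by rw [one_mul, mul_one]⟩
    have := TwoSidedIdeal.mem_span_iff.mp hx I hsub
    rwa [hmemI] at this
  -- now prove the conclusion by span induction
  clear hx hJ
  induction hxW using Submodule.span_induction with
  | mem y hy =>
    obtain ⟨g, s, t, rfl⟩ := hy
    constructor
    · intro i j hij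
      rcases lt_or_gt_of_ne hij with h | h
      · exact hup i j h _
      · -- j < i : lowering case
        have hlam' : (0 : ℤ) ≤ lam j - lam i := by
          have := hlam j i h.le
          omega
        have hcast0 : ((lam j - lam i : ℤ) : ℂ) = (((lam j - lam i).toNat : ℤ) : ℂ) := by
          rw [Int.toNat_of_nonneg hlam']
        have hcast : ((lam j - lam i : ℤ) : ℂ) = (((lam j - lam i).toNat : ℕ) : ℂ) := by
          rw [hcast0]
          push_cast
          ring
        refine lower_main ε v j i (ne_of_lt h) ((lam j - lam i).toNat)
          (fun x => hup j i h x) (fun x => by rw [hdiag j i x, hcast]) (hlow j i h)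
          (ιG g) (orderOf g) ?_ ?_ s t
        · exact orderOf_pos g
        · rw [← map_pow, pow_orderOf_eq_one, map_one]
    · intro i j
      rw [hdiag i j]
      have hε0 : ε (s * (ιG g - algebraMap ℂ S (ε (ιG g))) * t) = 0 := by
        rw [map_mul, map_mul, map_sub]
        simp
      rw [hε0, mul_zero, zero_smul]
  | zero =>
    constructor
    · intro i j _
      rw [Matrix.single_zero, zero_lie]
    · intro i j
      rw [Matrix.single_zero, Matrix.single_zero, sub_zero, zero_lie]
  | add y w hy hw ihy ihw =>
    constructor
    · intro i j hij
      rw [Matrix.single_add, add_lie, ihy.1 i j hij, ihw.1 i j hij, add_zero]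
    · intro i j
      have hre : Matrix.single i i (y + w) - Matrix.single j j (y + w)
          = (Matrix.single i i y - Matrix.single j j y)
            + (Matrix.single i i w - Matrix.single j j w) := by
        rw [Matrix.single_add, Matrix.single_add]
        abel
      rw [hre, add_lie, ihy.2 i j, ihw.2 i j, add_zero]
  | smul r y hy ihy =>
    constructor
    · intro i j hij
      rw [← Matrix.smul_single, smul_lie, ihy.1 i j hij, smul_zero]
    · intro i j
      rw [← Matrix.smul_single, ← Matrix.smul_single, ← smul_sub, smul_lie,
        ihy.2 i j, smul_zero]
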